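/- For every b > 0 and every k ∈ (0,1), the constant mean curvature κ^{b,k} := -2(E(k) + √(1-k²)·K(k)) / (π b (1 + √(1-k²))) satisfies the strict bounds -1/b < κ^{b,k} < -2/(π b); equivalently, 1 < (E(k) + √(1-k²)·K(k)) / (1 + √(1-k²)) < π/2 for all k ∈ (0,1). -/

import Mathlib

open Real

/-- Complete elliptic integral of the first kind. -/
noncomputable def ellK (k : ℝ) : ℝ :=
  ∫ u in (0:ℝ)..(π/2), 1 / Real.sqrt (1 - k^2 * Real.sin u ^ 2)

/-- Complete elliptic integral of the second kind. -/
noncomputable def ellE (k : ℝ) : ℝ :=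
  ∫ u in (0:ℝ)..(π/2), Real.sqrt (1 - k^2 * Real.sin u ^ 2)

/-- The constant mean curvature of the unduloid with size parameter `b` and
shape parameter `k`. -/
noncomputable def kappa (b k : ℝ) : ℝ :=
  -2 * (ellE k + Real.sqrt (1 - k^2) * ellK k) / (π * b * (1 + Real.sqrt (1 - k^2)))

set_option maxHeartbeats 1000000

theorem stmt_17 (b k : ℝ) (hb : 0 < b) (hk : k ∈ Set.Ioo (0:ℝ) 1) :
    (-1 / b < kappa b k ∧ kappa b k < -2 / (π * b)) ∧
    (1 < (ellE k + Real.sqrt (1 - k^2) * ellK k) / (1 + Real.sqrt (1 - k^2)) ∧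
      (ellE k + Real.sqrt (1 - k^2) * ellK k) / (1 + Real.sqrt (1 - k^2)) < π / 2) := by
  obtain ⟨hk0, hk1⟩ := hk
  set c : ℝ := Real.sqrt (1 - k^2) with hc
  have hk2 : k^2 < 1 := by nlinarith
  have hk2' : 0 < 1 - k^2 := by linarith
  have hc0 : 0 < c := Real.sqrt_pos.mpr hk2'
  have hcsq : c^2 = 1 - k^2 := Real.sq_sqrt hk2'.le
  have hc1 : c < 1 := by
    nlinarith [Real.sqrt_nonneg (1 - k^2)]
  have hπ2 : (0:ℝ) < π / 2 := by positivity
  -- pointwise facts about t u := √(1 - k² sin² u)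
  have hpos : ∀ u : ℝ, 0 < 1 - k^2 * Real.sin u ^ 2 := by
    intro u
    nlinarith [Real.sin_sq_le_one u, sq_nonneg (Real.sin u)]
  have htpos : ∀ u : ℝ, 0 < Real.sqrt (1 - k^2 * Real.sin u ^ 2) := fun u =>
    Real.sqrt_pos.mpr (hpos u)
  have htle1 : ∀ u : ℝ, Real.sqrt (1 - k^2 * Real.sin u ^ 2) ≤ 1 := by
    intro u
    exact Real.sqrt_le_one.mpr (by nlinarith [sq_nonneg (Real.sin u), sq_nonneg k])
  have htgec : ∀ u : ℝ, c ≤ Real.sqrt (1 - k^2 * Real.sin u ^ 2) := by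
    intro u
    exact Real.sqrt_le_sqrt (by nlinarith [Real.sin_sq_le_one u])
  -- continuity
  have hcontE : Continuous fun u : ℝ => Real.sqrt (1 - k^2 * Real.sin u ^ 2) := by
    continuity
  have hcontK : Continuous fun u : ℝ => 1 / Real.sqrt (1 - k^2 * Real.sin u ^ 2) := by
    exact continuous_const.div hcontE fun u => (htpos u).ne'
  have hIE : IntervalIntegrable (fun u : ℝ => Real.sqrt (1 - k^2 * Real.sin u ^ 2))
      MeasureTheory.volume 0 (π/2) := hcontE.intervalIntegrable _ _
  have hIK : IntervalIntegrable (fun u : ℝ => 1 / Real.sqrt (1 - k^2 * Real.sin u ^ 2))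
      MeasureTheory.volume 0 (π/2) := hcontK.intervalIntegrable _ _
  -- K ≥ π/2
  have hKge : π / 2 ≤ ellK k := by
    have h1 : (∫ u in (0:ℝ)..(π/2), (1:ℝ)) = π / 2 := by simp
    have h2 : (∫ u in (0:ℝ)..(π/2), (1:ℝ))
        ≤ ∫ u in (0:ℝ)..(π/2), 1 / Real.sqrt (1 - k^2 * Real.sin u ^ 2) := by
      apply intervalIntegral.integral_mono_on hπ2.le (intervalIntegrable_const) hIK
      intro x _
      rw [le_div_iff₀ (htpos x), one_mul]
      exact htle1 x
    rw [h1] at h2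
    exact h2
  -- E > 1
  have hsin4 : Real.sin (π/4) ^ 2 = 1/2 := by
    rw [Real.sin_pi_div_four, div_pow, Real.sq_sqrt (by norm_num : (0:ℝ) ≤ 2)]; norm_num
  have hpi4mem : π/4 ∈ Set.Icc (0:ℝ) (π/2) :=
    ⟨by positivity, by linarith [Real.pi_pos]⟩
  have hEgt : 1 < ellE k := by
    have h1 : (∫ u in (0:ℝ)..(π/2), Real.cos u) = 1 := by simp
    have h2 : (∫ u in (0:ℝ)..(π/2), Real.cos u)
        < ∫ u in (0:ℝ)..(π/2), Real.sqrt (1 - k^2 * Real.sin u ^ 2) := by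
      apply intervalIntegral.integral_lt_integral_of_continuousOn_of_le_of_exists_lt hπ2
        Real.continuous_cos.continuousOn hcontE.continuousOn
      · intro x hx
        have hcosnn : 0 ≤ Real.cos x := Real.cos_nonneg_of_mem_Icc
          ⟨by linarith [hx.1, Real.pi_pos], hx.2⟩
        rw [Real.le_sqrt hcosnn (hpos (x)).le]
        nlinarith [Real.sin_sq_add_cos_sq x, sq_nonneg (Real.sin x)]
      · refine ⟨π/4, hpi4mem, ?_⟩
        have hcos : Real.cos (π/4) = Real.sqrt 2 / 2 := Real.cos_pi_div_four
        rw [Real.lt_sqrt (by rw [hcos]; positivity), hsin4, hcos, div_pow,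
          Real.sq_sqrt (by norm_num : (0:ℝ) ≤ 2)]
        nlinarith
    rw [h1] at h2
    exact h2
  -- sum S
  set S : ℝ := ellE k + c * ellK k with hS
  have hSgt : 1 + c < S := by
    have : c * (π/2) ≤ c * ellK k := by
      exact mul_le_mul_of_nonneg_left hKge hc0.le
    nlinarith [Real.pi_gt_three]
  -- upper bound : S < (1+c) * (π/2)
  have hSlt : S < (1 + c) * (π / 2) := by
    have hkey : S = ∫ u in (0:ℝ)..(π/2),
        (Real.sqrt (1 - k^2 * Real.sin u ^ 2)
          + c * (1 / Real.sqrt (1 - k^2 * Real.sin u ^ 2))) := by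
      rw [hS, ellE, ellK, ← intervalIntegral.integral_const_mul,
        ← intervalIntegral.integral_add hIE (hIK.const_mul c)]
    have hconst : (∫ u in (0:ℝ)..(π/2), (1 + c : ℝ)) = (1 + c) * (π/2) := by
      simp; ring
    have hpt : Real.sqrt (1 - k^2 * Real.sin (π/4) ^ 2)
        + c * (1 / Real.sqrt (1 - k^2 * Real.sin (π/4) ^ 2)) < 1 + c := by
      set t := Real.sqrt (1 - k^2 * Real.sin (π/4) ^ 2) with ht
      have htlt1 : t < 1 := by
        have : t < Real.sqrt 1 := by
          rw [ht]
          apply Real.sqrt_lt_sqrt (hpos (π/4)).le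
          rw [hsin4]; nlinarith
        simpa using this
      have htgtc : c < t := by
        rw [ht, hc]
        apply Real.sqrt_lt_sqrt hk2'.le
        rw [hsin4]; nlinarith
      have h1 : c * (1 / t) < 1 + c - t := by
        rw [mul_one_div, div_lt_iff₀ (htpos (π/4))]
        nlinarith
      linarith
    rw [hkey, ← hconst]
    apply intervalIntegral.integral_lt_integral_of_continuousOn_of_le_of_exists_lt hπ2
      (hcontE.add (continuous_const.mul hcontK)).continuousOn continuousOn_const
    · intro x _
      set t := Real.sqrt (1 - k^2 * Real.sin x ^ 2) with ht
      have h1 : c * (1 / t) ≤ 1 + c - t := by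
        rw [mul_one_div, div_le_iff₀ (htpos x)]
        nlinarith [htle1 x, htgec x]
      show t + c * (1 / t) ≤ 1 + c
      linarith
    · exact ⟨π/4, hpi4mem, hpt⟩
  have hD : (0:ℝ) < 1 + c := by linarith
  have hdiv1 : 1 < S / (1 + c) := (one_lt_div hD).mpr (by linarith)
  have hdiv2 : S / (1 + c) < π / 2 := (div_lt_iff₀ hD).mpr (by linarith)
  have hPB : (0:ℝ) < π * b * (1 + c) := by positivity
  refine ⟨⟨?_, ?_⟩, hdiv1, hdiv2⟩
  · rw [kappa, ← hc, ← hS, div_lt_div_iff₀ hb hPB]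
    nlinarith [mul_lt_mul_of_pos_left hSlt (by positivity : (0:ℝ) < 2 * b), Real.pi_pos]
  · rw [kappa, ← hc, ← hS, div_lt_div_iff₀ hPB (by positivity : (0:ℝ) < π * b)]
    nlinarith [mul_lt_mul_of_pos_left hSgt (by positivity : (0:ℝ) < 2 * (π * b))]
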